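/- arXiv:math/0312337 — 4 statements merged into one kernel-verified Lean document; each statement's English description precedes it below -/
import Mathlib

section
/- Let H be a finite-dimensional Hopf algebra over a field k, λ a right integral for H* and Λ a left integral for H with λ(Λ) = 1. Then for every a ∈ H one has a = λ(a Λ₍₁₎) S(Λ₍₂₎), where Δ(Λ) = Λ₍₁₎ ⊗ Λ₍₂₎ in Sweedler notation. -/
open TensorProduct Coalgebra HopfAlgebra

section ULiftRepr
universe w
variable {k H : Type*} [CommSemiring k] [AddCommMonoid H] [Module k H] [CoalgebraStruct k H]

/-- Reindex a representation by a `Fin`-based index type in any universe. -/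
noncomputable def Coalgebra.Repr.toULift {x : H} {ι : Type*} (rx : Coalgebra.Repr k x ι) :
    Coalgebra.Repr k x (ULift.{w} (Fin rx.index.card)) where
  index := Finset.univ
  left i := rx.left (rx.index.equivFin.symm (Equiv.ulift i))
  right i := rx.right (rx.index.equivFin.symm (Equiv.ulift i))
  eq := by
    rw [← rx.eq, ← Finset.sum_coe_sort rx.index (fun j => rx.left j ⊗ₜ[k] rx.right j)]
    exact Equiv.sum_comp (Equiv.ulift.trans rx.index.equivFin.symm)
      (fun (s : rx.index) => rx.left s ⊗ₜ[k] rx.right s)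
end ULiftRepr

section Maps
variable {k H : Type*} [CommSemiring k] [Semiring H] [HopfAlgebra k H]

lemma repr_sum_eq (lam : H →ₗ[k] k) {x : H} {ι : Type*} (rx : Coalgebra.Repr k x ι) :
    ∑ i ∈ rx.index, lam (rx.left i) • rx.right i
      = (TensorProduct.lid k H) (LinearMap.rTensor H lam (Coalgebra.comul x)) := by
  rw [← rx.eq, map_sum, map_sum]
  simp

noncomputable def psiMap (lam : H →ₗ[k] k) (a : H) : (H ⊗[k] H) →ₗ[k] H :=
  (TensorProduct.lid k H).toLinearMap ∘ₗ
    TensorProduct.map (lam ∘ₗ LinearMap.mulLeft k a) (HopfAlgebra.antipode (R := k))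

lemma psiMap_tmul (lam : H →ₗ[k] k) (a u v : H) :
    psiMap lam a (u ⊗ₜ[k] v) = lam (a * u) • HopfAlgebra.antipode (R := k) v := by
  simp [psiMap]

lemma repr_psi_eq (lam : H →ₗ[k] k) (a : H) {x : H} {ι : Type*} (rx : Coalgebra.Repr k x ι) :
    ∑ i ∈ rx.index, lam (a * rx.left i) • HopfAlgebra.antipode (R := k) (rx.right i)
      = psiMap lam a (Coalgebra.comul x) := by
  rw [← rx.eq, map_sum]
  exact Finset.sum_congr rfl fun i _ => (psiMap_tmul lam a _ _).symm
end Maps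

section Prev
variable {k H : Type*} [CommSemiring k]

lemma sum_counit_smul' [AddCommMonoid H] [Module k H] [Coalgebra k H]
    {a : H} {ι : Type*} (r : Coalgebra.Repr k a ι) :
    ∑ i ∈ r.index, Coalgebra.counit (R := k) (r.left i) • r.right i = a := by
  have h := congrArg (TensorProduct.lid k H) (Coalgebra.sum_counit_tmul_eq r)
  simp only [map_sum, TensorProduct.lid_tmul, one_smul] at h
  exact h

lemma sum_smul_counit' [AddCommMonoid H] [Module k H] [Coalgebra k H]
    {a : H} {ι : Type*} (r : Coalgebra.Repr k a ι) :
    ∑ i ∈ r.index, Coalgebra.counit (R := k) (r.right i) • r.left i = a := by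
  have h := congrArg (TensorProduct.rid k H) (Coalgebra.sum_tmul_counit_eq r)
  simp only [map_sum, TensorProduct.rid_tmul, one_smul] at h
  exact h

variable [Semiring H] [HopfAlgebra k H]

noncomputable def Coalgebra.Repr.mulRepr {x y : H} {ι κ : Type*}
    (rx : Coalgebra.Repr k x ι) (ry : Coalgebra.Repr k y κ) :
    Coalgebra.Repr k (x * y) (ι × κ) where
  index := rx.index ×ˢ ry.index
  left p := rx.left p.1 * ry.left p.2
  right p := rx.right p.1 * ry.right p.2
  eq := by
    rw [Bialgebra.comul_mul, ← rx.eq, ← ry.eq, Finset.sum_mul_sum, Finset.sum_product]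
    simp [Algebra.TensorProduct.tmul_mul_tmul]

lemma key1 {u v : H} {ι κ : Type*} (ru : Coalgebra.Repr k u ι) (rv : Coalgebra.Repr k v κ) :
    ∑ i ∈ ru.index, ∑ j ∈ rv.index,
      HopfAlgebra.antipode (R := k) (ru.left i * rv.left j) * (ru.right i * rv.right j)
      = Coalgebra.counit (R := k) (u * v) • (1 : H) := by
  have h := sum_antipode_mul_eq_smul (R := k) (ru.mulRepr rv)
  simp only [Coalgebra.Repr.mulRepr] at h
  rw [Finset.sum_product] at h
  exact h

lemma key2 {u v : H} {ι κ : Type*} (ru : Coalgebra.Repr k u ι) (rv : Coalgebra.Repr k v κ) :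
    ∑ i ∈ ru.index, ∑ j ∈ rv.index,
      (ru.left i * rv.left j) *
        (HopfAlgebra.antipode (R := k) (rv.right j) * HopfAlgebra.antipode (R := k) (ru.right i))
      = Coalgebra.counit (R := k) (u * v) • (1 : H) := by
  have h1 : ∀ i, ∑ j ∈ rv.index,
      (ru.left i * rv.left j) *
        (HopfAlgebra.antipode (R := k) (rv.right j) * HopfAlgebra.antipode (R := k) (ru.right i))
      = Coalgebra.counit (R := k) v •
          (ru.left i * HopfAlgebra.antipode (R := k) (ru.right i)) := by
    intro i
    calc ∑ j ∈ rv.index, (ru.left i * rv.left j) *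
          (HopfAlgebra.antipode (R := k) (rv.right j) * HopfAlgebra.antipode (R := k) (ru.right i))
        = ru.left i * ((∑ j ∈ rv.index, rv.left j * HopfAlgebra.antipode (R := k) (rv.right j)) *
            HopfAlgebra.antipode (R := k) (ru.right i)) := by
          rw [Finset.sum_mul, Finset.mul_sum]
          refine Finset.sum_congr rfl fun j _ => ?_
          rw [mul_assoc, ← mul_assoc (rv.left j)]
      _ = Coalgebra.counit (R := k) v •
            (ru.left i * HopfAlgebra.antipode (R := k) (ru.right i)) := by
          rw [sum_mul_antipode_eq_smul rv, smul_mul_assoc, one_mul, mul_smul_comm]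
  calc ∑ i ∈ ru.index, ∑ j ∈ rv.index, (ru.left i * rv.left j) *
        (HopfAlgebra.antipode (R := k) (rv.right j) * HopfAlgebra.antipode (R := k) (ru.right i))
      = ∑ i ∈ ru.index, Coalgebra.counit (R := k) v •
          (ru.left i * HopfAlgebra.antipode (R := k) (ru.right i)) :=
        Finset.sum_congr rfl fun i _ => h1 i
    _ = Coalgebra.counit (R := k) v • (Coalgebra.counit (R := k) u • (1 : H)) := by
        rw [← Finset.smul_sum, sum_mul_antipode_eq_smul ru]
    _ = Coalgebra.counit (R := k) (u * v) • (1 : H) := by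
        rw [smul_smul, mul_comm, Bialgebra.counit_mul]

local notation "𝑺" => HopfAlgebra.antipode (R := k) (A := H)

noncomputable def Gmap : ((H ⊗[k] (H ⊗[k] H)) ⊗[k] (H ⊗[k] (H ⊗[k] H))) →ₗ[k] H :=
  LinearMap.mul' k H ∘ₗ
    TensorProduct.map (𝑺 ∘ₗ LinearMap.mul' k H)
      (LinearMap.mul' k H ∘ₗ
        TensorProduct.map (LinearMap.mul' k H)
          (LinearMap.mul' k H ∘ₗ TensorProduct.map 𝑺 𝑺 ∘ₗ (TensorProduct.comm k H H).toLinearMap)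
        ∘ₗ (TensorProduct.tensorTensorTensorComm k H H H H).toLinearMap) ∘ₗ
    (TensorProduct.tensorTensorTensorComm k H (H ⊗[k] H) H (H ⊗[k] H)).toLinearMap

lemma Gmap_tmul (x1 x2 x3 y1 y2 y3 : H) :
    Gmap ((x1 ⊗ₜ[k] (x2 ⊗ₜ[k] x3)) ⊗ₜ[k] (y1 ⊗ₜ[k] (y2 ⊗ₜ[k] y3))) =
      𝑺 (x1 * y1) * ((x2 * y2) * (𝑺 y3 * 𝑺 x3)) := by
  simp [Gmap, TensorProduct.tensorTensorTensorComm_tmul, TensorProduct.comm_tmul,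
    LinearMap.mul'_apply]
end Prev

section AntiMul
variable {k H : Type*} [CommSemiring k] [Semiring H] [HopfAlgebra k H]
local notation "𝑺" => HopfAlgebra.antipode (R := k) (A := H)
local notation "ε" => Coalgebra.counit (R := k) (A := H)

lemma antipode_mul_rev (x y : H) : 𝑺 (x * y) = 𝑺 y * 𝑺 x := by
  classical
  set rx := Coalgebra.Repr.arbitrary k x with hrx
  set ry := Coalgebra.Repr.arbitrary k y with hry
  set rx1 : (i : H × H) → Coalgebra.Repr k (rx.left i) (H × H) :=
    fun i => Coalgebra.Repr.arbitrary k (rx.left i) with hrx1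
  set rx2 : (i : H × H) → Coalgebra.Repr k (rx.right i) (H × H) :=
    fun i => Coalgebra.Repr.arbitrary k (rx.right i) with hrx2
  set ry1 : (j : H × H) → Coalgebra.Repr k (ry.left j) (H × H) :=
    fun j => Coalgebra.Repr.arbitrary k (ry.left j) with hry1
  set ry2 : (j : H × H) → Coalgebra.Repr k (ry.right j) (H × H) :=
    fun j => Coalgebra.Repr.arbitrary k (ry.right j) with hry2
  have hx := Coalgebra.sum_tmul_tmul_eq rx rx1 rx2
  have hy := Coalgebra.sum_tmul_tmul_eq ry ry1 ry2
  have eL : Gmap ((∑ i ∈ rx.index, ∑ p ∈ (rx1 i).index,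
        (rx1 i).left p ⊗ₜ[k] ((rx1 i).right p ⊗ₜ[k] rx.right i)) ⊗ₜ[k]
      (∑ j ∈ ry.index, ∑ q ∈ (ry1 j).index,
        (ry1 j).left q ⊗ₜ[k] ((ry1 j).right q ⊗ₜ[k] ry.right j)))
      = ∑ j ∈ ry.index, ∑ q ∈ (ry1 j).index, ∑ i ∈ rx.index, ∑ p ∈ (rx1 i).index,
          𝑺 ((rx1 i).left p * (ry1 j).left q) *
            (((rx1 i).right p * (ry1 j).right q) * (𝑺 (ry.right j) * 𝑺 (rx.right i))) := by
    simp only [TensorProduct.sum_tmul, TensorProduct.tmul_sum, map_sum, Gmap_tmul]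
  have eR : Gmap ((∑ i ∈ rx.index, ∑ p ∈ (rx2 i).index,
        rx.left i ⊗ₜ[k] ((rx2 i).left p ⊗ₜ[k] (rx2 i).right p)) ⊗ₜ[k]
      (∑ j ∈ ry.index, ∑ q ∈ (ry2 j).index,
        ry.left j ⊗ₜ[k] ((ry2 j).left q ⊗ₜ[k] (ry2 j).right q)))
      = ∑ j ∈ ry.index, ∑ q ∈ (ry2 j).index, ∑ i ∈ rx.index, ∑ p ∈ (rx2 i).index,
          𝑺 (rx.left i * ry.left j) *
            (((rx2 i).left p * (ry2 j).left q) *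
              (𝑺 ((ry2 j).right q) * 𝑺 ((rx2 i).right p))) := by
    simp only [TensorProduct.sum_tmul, TensorProduct.tmul_sum, map_sum, Gmap_tmul]
  have assoc :
      (∑ j ∈ ry.index, ∑ q ∈ (ry1 j).index, ∑ i ∈ rx.index, ∑ p ∈ (rx1 i).index,
          𝑺 ((rx1 i).left p * (ry1 j).left q) *
            (((rx1 i).right p * (ry1 j).right q) * (𝑺 (ry.right j) * 𝑺 (rx.right i))))
      = ∑ j ∈ ry.index, ∑ q ∈ (ry2 j).index, ∑ i ∈ rx.index, ∑ p ∈ (rx2 i).index,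
          𝑺 (rx.left i * ry.left j) *
            (((rx2 i).left p * (ry2 j).left q) *
              (𝑺 ((ry2 j).right q) * 𝑺 ((rx2 i).right p))) := by
    rw [← eL, ← eR, hx, hy]
  have eval_left :
      (∑ j ∈ ry.index, ∑ q ∈ (ry1 j).index, ∑ i ∈ rx.index, ∑ p ∈ (rx1 i).index,
          𝑺 ((rx1 i).left p * (ry1 j).left q) *
            (((rx1 i).right p * (ry1 j).right q) * (𝑺 (ry.right j) * 𝑺 (rx.right i))))
      = 𝑺 y * 𝑺 x := by
    have step1 : ∀ j ∈ ry.index,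
        (∑ q ∈ (ry1 j).index, ∑ i ∈ rx.index, ∑ p ∈ (rx1 i).index,
          𝑺 ((rx1 i).left p * (ry1 j).left q) *
            (((rx1 i).right p * (ry1 j).right q) * (𝑺 (ry.right j) * 𝑺 (rx.right i))))
        = ∑ i ∈ rx.index,
            (ε (rx.left i) * ε (ry.left j)) • (𝑺 (ry.right j) * 𝑺 (rx.right i)) := by
      intro j _
      rw [Finset.sum_comm]
      refine Finset.sum_congr rfl fun i _ => ?_
      rw [Finset.sum_comm]
      calc ∑ p ∈ (rx1 i).index, ∑ q ∈ (ry1 j).index,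
            𝑺 ((rx1 i).left p * (ry1 j).left q) *
              (((rx1 i).right p * (ry1 j).right q) * (𝑺 (ry.right j) * 𝑺 (rx.right i)))
          = (∑ p ∈ (rx1 i).index, ∑ q ∈ (ry1 j).index,
              𝑺 ((rx1 i).left p * (ry1 j).left q) *
                ((rx1 i).right p * (ry1 j).right q)) * (𝑺 (ry.right j) * 𝑺 (rx.right i)) := by
            rw [Finset.sum_mul]
            refine Finset.sum_congr rfl fun p _ => ?_
            rw [Finset.sum_mul]
            refine Finset.sum_congr rfl fun q _ => ?_
            simp only [mul_assoc]
        _ = (ε (rx.left i * ry.left j) • (1:H)) * (𝑺 (ry.right j) * 𝑺 (rx.right i)) := by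
            rw [key1 (rx1 i) (ry1 j)]
        _ = (ε (rx.left i) * ε (ry.left j)) • (𝑺 (ry.right j) * 𝑺 (rx.right i)) := by
            rw [smul_mul_assoc, one_mul, Bialgebra.counit_mul]
    calc (∑ j ∈ ry.index, ∑ q ∈ (ry1 j).index, ∑ i ∈ rx.index, ∑ p ∈ (rx1 i).index,
          𝑺 ((rx1 i).left p * (ry1 j).left q) *
            (((rx1 i).right p * (ry1 j).right q) * (𝑺 (ry.right j) * 𝑺 (rx.right i))))
        = ∑ j ∈ ry.index, ∑ i ∈ rx.index,
            (ε (rx.left i) * ε (ry.left j)) • (𝑺 (ry.right j) * 𝑺 (rx.right i)) :=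
          Finset.sum_congr rfl step1
      _ = ∑ j ∈ ry.index, ε (ry.left j) • (𝑺 (ry.right j) * 𝑺 x) := by
          refine Finset.sum_congr rfl fun j _ => ?_
          have hSx : (𝑺 x : H) = ∑ i ∈ rx.index, ε (rx.left i) • 𝑺 (rx.right i) := by
            conv_lhs => rw [← sum_counit_smul' rx]
            simp only [map_sum, map_smul]
          rw [hSx, Finset.mul_sum, Finset.smul_sum]
          refine Finset.sum_congr rfl fun i _ => ?_
          rw [mul_smul_comm, smul_smul, mul_comm (ε (rx.left i))]
      _ = 𝑺 y * 𝑺 x := by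
          have hSy : (𝑺 y : H) = ∑ j ∈ ry.index, ε (ry.left j) • 𝑺 (ry.right j) := by
            conv_lhs => rw [← sum_counit_smul' ry]
            simp only [map_sum, map_smul]
          rw [hSy, Finset.sum_mul]
          exact Finset.sum_congr rfl fun j _ => (smul_mul_assoc _ _ _).symm
  have eval_right :
      (∑ j ∈ ry.index, ∑ q ∈ (ry2 j).index, ∑ i ∈ rx.index, ∑ p ∈ (rx2 i).index,
          𝑺 (rx.left i * ry.left j) *
            (((rx2 i).left p * (ry2 j).left q) *
              (𝑺 ((ry2 j).right q) * 𝑺 ((rx2 i).right p))))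
      = 𝑺 (x * y) := by
    have step2 : ∀ j ∈ ry.index,
        (∑ q ∈ (ry2 j).index, ∑ i ∈ rx.index, ∑ p ∈ (rx2 i).index,
          𝑺 (rx.left i * ry.left j) *
            (((rx2 i).left p * (ry2 j).left q) *
              (𝑺 ((ry2 j).right q) * 𝑺 ((rx2 i).right p))))
        = ∑ i ∈ rx.index,
            (ε (rx.right i) * ε (ry.right j)) • 𝑺 (rx.left i * ry.left j) := by
      intro j _
      rw [Finset.sum_comm]
      refine Finset.sum_congr rfl fun i _ => ?_
      rw [Finset.sum_comm]
      calc ∑ p ∈ (rx2 i).index, ∑ q ∈ (ry2 j).index,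
            𝑺 (rx.left i * ry.left j) *
              (((rx2 i).left p * (ry2 j).left q) *
                (𝑺 ((ry2 j).right q) * 𝑺 ((rx2 i).right p)))
          = 𝑺 (rx.left i * ry.left j) *
              ∑ p ∈ (rx2 i).index, ∑ q ∈ (ry2 j).index,
                ((rx2 i).left p * (ry2 j).left q) *
                  (𝑺 ((ry2 j).right q) * 𝑺 ((rx2 i).right p)) := by
            rw [Finset.mul_sum]
            refine Finset.sum_congr rfl fun p _ => ?_
            rw [Finset.mul_sum]
        _ = 𝑺 (rx.left i * ry.left j) * (ε (rx.right i * ry.right j) • (1:H)) := by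
            rw [key2 (rx2 i) (ry2 j)]
        _ = (ε (rx.right i) * ε (ry.right j)) • 𝑺 (rx.left i * ry.left j) := by
            rw [mul_smul_comm, mul_one, Bialgebra.counit_mul]
    have hxLy : ∀ j : H × H, ∑ i ∈ rx.index, ε (rx.right i) • 𝑺 (rx.left i * ry.left j)
        = 𝑺 (x * ry.left j) := by
      intro j
      conv_rhs => rw [← sum_smul_counit' rx]
      rw [Finset.sum_mul, map_sum]
      exact Finset.sum_congr rfl fun i _ => by rw [smul_mul_assoc, map_smul]
    calc (∑ j ∈ ry.index, ∑ q ∈ (ry2 j).index, ∑ i ∈ rx.index, ∑ p ∈ (rx2 i).index,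
          𝑺 (rx.left i * ry.left j) *
            (((rx2 i).left p * (ry2 j).left q) *
              (𝑺 ((ry2 j).right q) * 𝑺 ((rx2 i).right p))))
        = ∑ j ∈ ry.index, ∑ i ∈ rx.index,
            (ε (rx.right i) * ε (ry.right j)) • 𝑺 (rx.left i * ry.left j) :=
          Finset.sum_congr rfl step2
      _ = ∑ j ∈ ry.index, ε (ry.right j) • 𝑺 (x * ry.left j) := by
          refine Finset.sum_congr rfl fun j _ => ?_
          rw [← hxLy j, Finset.smul_sum]
          refine Finset.sum_congr rfl fun i _ => ?_
          rw [smul_smul, mul_comm (ε (ry.right j))]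
      _ = 𝑺 (x * y) := by
          conv_rhs => rw [← sum_smul_counit' ry]
          rw [Finset.mul_sum, map_sum]
          exact Finset.sum_congr rfl fun j _ => by rw [mul_smul_comm, map_smul]
  rw [← eval_right, ← assoc, eval_left]
end AntiMul

section Chi
variable {k H : Type*} [CommSemiring k] [Semiring H] [HopfAlgebra k H]

lemma antipode_one' : HopfAlgebra.antipode (R := k) (1 : H) = 1 := by
  have h := HopfAlgebra.mul_antipode_rTensor_comul_apply (R := k) (A := H) (1 : H)
  simpa [Algebra.TensorProduct.one_def] using h

noncomputable def chiMap (lam : H →ₗ[k] k) (lq rq : H) : (H ⊗[k] (H ⊗[k] H)) →ₗ[k] H :=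
  (TensorProduct.lid k H).toLinearMap ∘ₗ
    TensorProduct.map (lam ∘ₗ LinearMap.mulRight k lq)
      (LinearMap.mulLeft k (HopfAlgebra.antipode (R := k) rq) ∘ₗ LinearMap.mul' k H ∘ₗ
        LinearMap.rTensor H (HopfAlgebra.antipode (R := k)))

lemma chiMap_tmul (lam : H →ₗ[k] k) (lq rq x1 x2 x3 : H) :
    chiMap lam lq rq (x1 ⊗ₜ[k] (x2 ⊗ₜ[k] x3)) =
      lam (x1 * lq) • (HopfAlgebra.antipode (R := k) rq *
        (HopfAlgebra.antipode (R := k) x2 * x3)) := by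
  simp [chiMap, LinearMap.mul'_apply]
end Chi

/- STATEMENT 0: Let H be a finite-dimensional Hopf algebra over a field k, λ a right
integral for H* and Λ a left integral for H with λ(Λ) = 1. Then for every a ∈ H,
a = λ(a Λ₍₁₎) S(Λ₍₂₎).  Sweedler sums are expressed via `Coalgebra.Repr`. -/

theorem stmt0 {k H : Type*} [Field k] [Ring H] [HopfAlgebra k H] [FiniteDimensional k H]
    (lam : H →ₗ[k] k) (Λ : H)
    -- λ is a right integral for H*:  λ(x₍₁₎) x₍₂₎ = λ(x) 1 for all x
    (hlam : ∀ (x : H) {ι : Type*} (r : Coalgebra.Repr k x ι),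
      ∑ i ∈ r.index, lam (r.left i) • r.right i = lam x • (1 : H))
    -- Λ is a left integral for H:  x Λ = ε(x) Λ for all x
    (hΛ : ∀ x : H, x * Λ = Coalgebra.counit (R := k) x • Λ)
    (hpair : lam Λ = 1) :
    ∀ (a : H) {ι : Type*} (r : Coalgebra.Repr k Λ ι),
      a = ∑ i ∈ r.index, lam (a * r.left i) • HopfAlgebra.antipode (R := k) (r.right i) := by
  classical
  -- the right-integral property, in representation-free form
  have hlamP : ∀ x : H,
      (TensorProduct.lid k H) (LinearMap.rTensor H lam (Coalgebra.comul x))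
        = lam x • (1 : H) := fun x =>
    (repr_sum_eq lam ((Coalgebra.Repr.arbitrary k x).toULift)).symm.trans
      (hlam x ((Coalgebra.Repr.arbitrary k x).toULift))
  have step2 : ∀ x : H, lam (x * Λ) = Coalgebra.counit (R := k) x := by
    intro x; rw [hΛ x, map_smul, hpair, smul_eq_mul, mul_one]
  intro a _ r
  -- replace the given representation by the arbitrarily chosen one
  set r' := Coalgebra.Repr.arbitrary k Λ with hr'def
  rw [show (∑ i ∈ r.index, lam (a * r.left i) •
        HopfAlgebra.antipode (R := k) (r.right i))
      = ∑ i ∈ r'.index, lam (a * r'.left i) •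
        HopfAlgebra.antipode (R := k) (r'.right i) from
    (repr_psi_eq lam a r).trans (repr_psi_eq lam a r').symm]
  set ra := Coalgebra.Repr.arbitrary k a with hra
  set ra1 : (i : H × H) → Coalgebra.Repr k (ra.left i) (H × H) :=
    fun i => Coalgebra.Repr.arbitrary k (ra.left i) with hra1
  set ra2 : (i : H × H) → Coalgebra.Repr k (ra.right i) (H × H) :=
    fun i => Coalgebra.Repr.arbitrary k (ra.right i) with hra2
  have hart := Coalgebra.sum_tmul_tmul_eq ra ra1 ra2
  have key3 : ∀ i : H × H, ∑ p ∈ (ra1 i).index, ∑ q ∈ r'.index,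
      lam ((ra1 i).left p * r'.left q) •
        HopfAlgebra.antipode (R := k) ((ra1 i).right p * r'.right q)
      = lam (ra.left i * Λ) • (1 : H) := by
    intro i
    have h0 := (repr_sum_eq lam ((ra1 i).mulRepr r')).trans (hlamP (ra.left i * Λ))
    have h := congrArg (HopfAlgebra.antipode (R := k) (A := H)) h0
    simp only [map_sum, map_smul, antipode_one'] at h
    simp only [Coalgebra.Repr.mulRepr] at h
    rw [Finset.sum_product] at h
    exact h
  calc a = ∑ i ∈ ra.index, Coalgebra.counit (R := k) (ra.left i) • ra.right i :=
        (sum_counit_smul' ra).symm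
    _ = ∑ i ∈ ra.index, lam (ra.left i * Λ) • ra.right i := by
        refine Finset.sum_congr rfl fun i _ => ?_
        rw [step2]
    _ = ∑ i ∈ ra.index, (lam (ra.left i * Λ) • (1 : H)) * ra.right i := by
        refine Finset.sum_congr rfl fun i _ => ?_
        rw [smul_mul_assoc, one_mul]
    _ = ∑ i ∈ ra.index, (∑ p ∈ (ra1 i).index, ∑ q ∈ r'.index,
          lam ((ra1 i).left p * r'.left q) •
            HopfAlgebra.antipode (R := k) ((ra1 i).right p * r'.right q)) * ra.right i := by
        refine Finset.sum_congr rfl fun i _ => ?_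
        rw [key3 i]
    _ = ∑ i ∈ ra.index, ∑ p ∈ (ra1 i).index, ∑ q ∈ r'.index,
          lam ((ra1 i).left p * r'.left q) •
            (HopfAlgebra.antipode (R := k) (r'.right q) *
              (HopfAlgebra.antipode (R := k) ((ra1 i).right p) * ra.right i)) := by
        refine Finset.sum_congr rfl fun i _ => ?_
        rw [Finset.sum_mul]
        refine Finset.sum_congr rfl fun p _ => ?_
        rw [Finset.sum_mul]
        refine Finset.sum_congr rfl fun q _ => ?_
        rw [smul_mul_assoc, antipode_mul_rev, mul_assoc]
    _ = ∑ q ∈ r'.index, ∑ i ∈ ra.index, ∑ p ∈ (ra1 i).index,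
          lam ((ra1 i).left p * r'.left q) •
            (HopfAlgebra.antipode (R := k) (r'.right q) *
              (HopfAlgebra.antipode (R := k) ((ra1 i).right p) * ra.right i)) := by
        rw [Finset.sum_congr rfl fun i (_ : i ∈ ra.index) => Finset.sum_comm]
        exact Finset.sum_comm
    _ = ∑ q ∈ r'.index, ∑ i ∈ ra.index, ∑ p ∈ (ra2 i).index,
          lam (ra.left i * r'.left q) •
            (HopfAlgebra.antipode (R := k) (r'.right q) *
              (HopfAlgebra.antipode (R := k) ((ra2 i).left p) * (ra2 i).right p)) := by
        refine Finset.sum_congr rfl fun q _ => ?_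
        have h := congrArg (chiMap lam (r'.left q) (r'.right q)) hart
        simp only [map_sum, chiMap_tmul] at h
        exact h
    _ = ∑ q ∈ r'.index, ∑ i ∈ ra.index,
          (Coalgebra.counit (R := k) (ra.right i) * lam (ra.left i * r'.left q)) •
            HopfAlgebra.antipode (R := k) (r'.right q) := by
        refine Finset.sum_congr rfl fun q _ => ?_
        refine Finset.sum_congr rfl fun i _ => ?_
        rw [← Finset.smul_sum, ← Finset.mul_sum, sum_antipode_mul_eq_smul (ra2 i),
          mul_smul_comm, mul_one, smul_smul, mul_comm]
    _ = ∑ q ∈ r'.index, lam (a * r'.left q) •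
          HopfAlgebra.antipode (R := k) (r'.right q) := by
        refine Finset.sum_congr rfl fun q _ => ?_
        rw [← Finset.sum_smul]
        congr 1
        conv_rhs => rw [← sum_smul_counit' ra]
        rw [Finset.sum_mul, map_sum]
        exact Finset.sum_congr rfl fun i _ => by
          rw [smul_mul_assoc, map_smul, smul_eq_mul]
end

section
/- Let H be a finite-dimensional Hopf algebra with right integral λ for H* and distinguished grouplike ν of H*. If 1 ∈ L(H) (i.e. x ↼ ν = x for all x ∈ H), then H is unimodular, i.e. ν = ε. Conversely, if H is unimodular then L(H) = Z(H), the center of H. -/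
/- STATEMENT 9: H a finite-dimensional Hopf algebra with right integral λ for H* and
distinguished grouplike ν of H*.  If 1 ∈ L(H) (i.e. x ↼ ν = x for all x) then H is
unimodular (ν = ε).  Conversely, if H is unimodular then L(H) = Z(H). -/

open TensorProduct Coalgebra HopfAlgebra

/-- The right action `x ↼ ν = ν(x₍₁₎) x₍₂₎`. -/
noncomputable def actnu {k H : Type*} [Field k] [Ring H] [HopfAlgebra k H]
    (ν : H →ₐ[k] k) : H →ₗ[k] H :=
  (TensorProduct.lid k H).toLinearMap ∘ₗ (TensorProduct.map ν.toLinearMap LinearMap.id)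
    ∘ₗ (Coalgebra.comul : H →ₗ[k] H ⊗[k] H)

lemma actnu_repr {k H : Type*} [Field k] [Ring H] [HopfAlgebra k H]
    (ν : H →ₐ[k] k) (x : H) {ι : Type*} (r : Coalgebra.Repr k x ι) :
    actnu ν x = ∑ i ∈ r.index, ν (r.left i) • r.right i := by
  simp only [actnu, LinearMap.coe_comp, Function.comp_apply, LinearEquiv.coe_coe]
  rw [← r.eq, map_sum, map_sum]
  simp

lemma counit_actnu {k H : Type*} [Field k] [Ring H] [HopfAlgebra k H]
    (ν : H →ₐ[k] k) (x : H) :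
    Coalgebra.counit (R := k) (actnu ν x) = ν x := by
  set r := Coalgebra.Repr.arbitrary k x
  rw [actnu_repr ν x r, map_sum]
  have h := Coalgebra.sum_tmul_counit_eq (R := k) r
  apply_fun (TensorProduct.rid k H) at h
  rw [map_sum] at h
  simp only [TensorProduct.rid_tmul, mul_one, one_smul] at h
  calc ∑ i ∈ r.index, Coalgebra.counit (R := k) (ν (r.left i) • r.right i)
      = ν (∑ i ∈ r.index, Coalgebra.counit (R := k) (r.right i) • r.left i) := by
        rw [map_sum]; congr 1; ext i
        simp [smul_eq_mul, mul_comm]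
    _ = ν x := by rw [h]

lemma actnu_counit {k H : Type*} [Field k] [Ring H] [HopfAlgebra k H]
    (ν : H →ₐ[k] k) (hu : ∀ x : H, ν x = Coalgebra.counit (R := k) x) (x : H) :
    actnu ν x = x := by
  have hmap : TensorProduct.map ν.toLinearMap (LinearMap.id (M := H)) =
      LinearMap.rTensor H (Coalgebra.counit (R := k)) := by
    ext a b
    simp [hu a]
  simp only [actnu, LinearMap.coe_comp, Function.comp_apply, LinearEquiv.coe_coe, hmap]
  rw [Coalgebra.rTensor_counit_comul]
  simp

theorem stmt9 {k H : Type*} [Field k] [Ring H] [HopfAlgebra k H] [FiniteDimensional k H]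
    (lam : H →ₗ[k] k) (hlam0 : lam ≠ 0)
    (hlam : ∀ (x : H) (ι : Type _) (r : Coalgebra.Repr k x ι),
      ∑ i ∈ r.index, lam (r.left i) • r.right i = lam x • (1 : H))
    (Λ : H) (hΛ0 : Λ ≠ 0)
    (hΛ : ∀ x : H, x * Λ = Coalgebra.counit (R := k) x • Λ)
    (ν : H →ₐ[k] k) (hν : ∀ x : H, Λ * x = ν x • Λ) :
    -- 1 ∈ L(H) implies unimodularity
    ((∀ x : H, actnu ν x * 1 = 1 * x) → ∀ x : H, ν x = Coalgebra.counit (R := k) x) ∧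
    -- unimodularity implies L(H) = Z(H)
    ((∀ x : H, ν x = Coalgebra.counit (R := k) x) →
      {z : H | ∀ x : H, actnu ν x * z = z * x} = {z : H | ∀ x : H, z * x = x * z}) := by
  constructor
  · intro h x
    have hx : actnu ν x = x := by simpa using h x
    rw [← counit_actnu ν x, hx]
  · intro hu
    ext z
    simp only [Set.mem_setOf_eq]
    constructor
    · intro h x
      have := h x
      rw [actnu_counit ν hu x] at this
      exact this.symm
    · intro h x
      rw [actnu_counit ν hu x]
      exact (h x).symm
end

section
/- Let H_n be the Hopf algebra as above and ν its distinguished grouplike of H_n* (ν(a) = −1, ν(x) = 0). Then L(H_n) = { z ∈ H_n | (h ↼ ν) z = z h ∀h } is the span of { a^k x | 0 ≤ k < 2n }, and the center Z(H_n) is the span of { a^{2k} | 0 ≤ k < n }. -/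
/- STATEMENT 18: H_n as above, ν its distinguished grouplike of H_n* (ν(a) = −1,
ν(x) = 0).  Then L(H_n) = span{ a^k x | 0 ≤ k < 2n } and
Z(H_n) = span{ a^{2k} | 0 ≤ k < n }. -/

open TensorProduct Coalgebra HopfAlgebra

theorem stmt18 {k H : Type*} [Field k] [Ring H] [HopfAlgebra k H]
    (n : ℕ) (hn1 : Odd n) (hn2 : 0 < n) (hchar : (2 * n : k) ≠ 0)
    (a x : H)
    (ha : a ^ (2 * n) = 1) (hx : x * x = 0) (hax : a * x = - (x * a))
    (hΔa : Coalgebra.comul (R := k) a = a ⊗ₜ[k] a)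
    (hΔx : Coalgebra.comul (R := k) x = x ⊗ₜ[k] (a ^ n) + 1 ⊗ₜ[k] x)
    (hεa : Coalgebra.counit (R := k) a = 1)
    (hεx : Coalgebra.counit (R := k) x = 0)
    (hSa : HopfAlgebra.antipode (R := k) a = a ^ (2 * n - 1))
    (hSx : HopfAlgebra.antipode (R := k) x = a ^ n * x)
    (B : Module.Basis (Fin (2 * n) × Fin 2) k H)
    (hB : ∀ (l : Fin (2 * n)) (m : Fin 2), B (l, m) = a ^ (l : ℕ) * x ^ (m : ℕ))
    -- ν is the distinguished grouplike of H_n*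
    (ν : H →ₐ[k] k) (hνa : ν a = -1) (hνx : ν x = 0) :
    -- L(H_n) = span{ a^k x | 0 ≤ k < 2n }
    {z : H | ∀ h : H, actnu ν h * z = z * h}
      = ↑(Submodule.span k (Set.range fun l : Fin (2 * n) => a ^ (l : ℕ) * x)) ∧
    -- Z(H_n) = span{ a^{2k} | 0 ≤ k < n }
    {z : H | ∀ h : H, z * h = h * z}
      = ↑(Submodule.span k (Set.range fun l : Fin n => a ^ (2 * (l : ℕ)))) := by
  haveI : NeZero (2 * n) := ⟨by omega⟩
  have h2 : (2 : k) ≠ 0 := by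
    intro h; exact hchar (by rw [h, zero_mul])
  -- basic multiplicative relations
  have hxa : x * a = -(a * x) := by rw [hax, neg_neg]
  have hxal : ∀ l : ℕ, x * a ^ l = ((-1 : k) ^ l) • (a ^ l * x) := by
    intro l
    induction l with
    | zero => simp
    | succ l ih =>
      rw [pow_succ' a l, ← mul_assoc, hxa, neg_mul, mul_assoc, ih, mul_smul_comm,
        ← mul_assoc, ← pow_succ' a l, pow_succ' (-1 : k) l, neg_one_mul, neg_smul]
  -- the exponent-shift fact in `Fin (2*n)`
  have hone : ((1 : Fin (2 * n)) : ℕ) = 1 := by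
    have h1 : 1 < 2 * n := by omega
    simp [Fin.val_one', Nat.mod_eq_of_lt h1]
  have hsucc : ∀ l : Fin (2 * n), a ^ ((l : ℕ) + 1) = a ^ (((l + 1 : Fin (2 * n))) : ℕ) := by
    intro l
    rw [pow_eq_pow_mod ((l : ℕ) + 1) ha]
    congr 1
    have hv := Fin.val_add l 1
    rw [hone] at hv
    omega
  -- basis element computations
  have hfin2 : ∀ m : Fin 2, m = 0 ∨ m = 1 := by decide
  have hB0 : ∀ l : Fin (2 * n), B (l, 0) = a ^ (l : ℕ) := by
    intro l; rw [hB]; simp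
  have hB1 : ∀ l : Fin (2 * n), B (l, 1) = a ^ (l : ℕ) * x := by
    intro l; rw [hB]; simp
  have haB : ∀ (l : Fin (2 * n)) (m : Fin 2), a * B (l, m) = B (l + 1, m) := by
    intro l m
    rw [hB, hB, ← mul_assoc, ← pow_succ' a (l : ℕ), hsucc]
  have hBa : ∀ (l : Fin (2 * n)) (m : Fin 2),
      B (l, m) * a = ((-1 : k) ^ (m : ℕ)) • B (l + 1, m) := by
    intro l m
    rcases hfin2 m with rfl | rfl
    · rw [hB0, hB0]
      simp only [Fin.val_zero, pow_zero, one_smul]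
      rw [pow_mul_comm', ← pow_succ' a (l : ℕ), hsucc]
    · rw [hB1, hB1]
      simp only [Fin.val_one, pow_one, neg_smul, one_smul]
      rw [mul_assoc, hxa, mul_neg, ← mul_assoc, pow_mul_comm', ← pow_succ' a (l : ℕ), hsucc]
  have hxB : ∀ (l : Fin (2 * n)) (m : Fin 2),
      x * B (l, m) = (if m = 0 then ((-1 : k) ^ (l : ℕ)) else 0) • B (l, 1) := by
    intro l m
    rcases hfin2 m with rfl | rfl
    · rw [hB0, hB1, if_pos rfl, hxal]
    · rw [hB1, if_neg (by decide), zero_smul, ← mul_assoc, hxal, smul_mul_assoc,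
        mul_assoc, hx, mul_zero, smul_zero]
  have hBx : ∀ (l : Fin (2 * n)) (m : Fin 2),
      B (l, m) * x = (if m = 0 then (1 : k) else 0) • B (l, 1) := by
    intro l m
    rcases hfin2 m with rfl | rfl
    · rw [hB0, hB1, if_pos rfl, one_smul]
    · rw [hB1, if_neg (by decide), zero_smul, mul_assoc, hx, mul_zero]
  -- facts about the map `actnu ν`
  set Φ : H →ₐ[k] H :=
    ((Algebra.TensorProduct.lid k H).toAlgHom.comp
      ((Algebra.TensorProduct.map ν (AlgHom.id k H)).comp (Bialgebra.comulAlgHom k H)))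
    with hΦdef
  have hact : ∀ h : H, actnu ν h = Φ h := by
    intro h
    show (TensorProduct.lid k H) ((TensorProduct.map ν.toLinearMap LinearMap.id)
        (Coalgebra.comul h)) =
      (Algebra.TensorProduct.lid k H) ((Algebra.TensorProduct.map ν (AlgHom.id k H))
        ((Bialgebra.comulAlgHom k H) h))
    rw [Bialgebra.comulAlgHom_apply]
    generalize (Coalgebra.comul (R := k) h) = t
    induction t using TensorProduct.induction_on with
    | zero => simp
    | tmul g h' => simp
    | add s t hs ht => rw [map_add, map_add, map_add, map_add, hs, ht]
  have hφmul : ∀ g h : H, actnu ν (g * h) = actnu ν g * actnu ν h := by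
    intro g h; rw [hact, hact, hact, map_mul]
  have hφalg : ∀ r : k, actnu ν (algebraMap k H r) = algebraMap k H r := by
    intro r; rw [hact, AlgHom.commutes]
  have hφa : actnu ν a = -a := by
    show (TensorProduct.lid k H) ((TensorProduct.map ν.toLinearMap LinearMap.id)
        (Coalgebra.comul a)) = -a
    rw [hΔa]; simp [hνa]
  have hφx : actnu ν x = x := by
    show (TensorProduct.lid k H) ((TensorProduct.map ν.toLinearMap LinearMap.id)
        (Coalgebra.comul x)) = x
    rw [hΔx]; simp [hνx]
  -- everything is in the algebra generated by a and x
  have hadj : ∀ h : H, h ∈ Algebra.adjoin k ({a, x} : Set H) := by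
    intro h
    have h1 : (⊤ : Submodule k H) ≤
        Subalgebra.toSubmodule (Algebra.adjoin k ({a, x} : Set H)) := by
      rw [← B.span_eq]
      apply Submodule.span_le.2
      rintro _ ⟨p, rfl⟩
      rw [show B p = B (p.1, p.2) from by rw [Prod.mk.eta], hB p.1 p.2]
      rw [SetLike.mem_coe, Subalgebra.mem_toSubmodule]
      exact mul_mem (pow_mem (Algebra.subset_adjoin (by simp)) _)
        (pow_mem (Algebra.subset_adjoin (by simp)) _)
    exact h1 trivial
  -- checking the L-condition on generators suffices
  have hgen : ∀ z : H, (-a) * z = z * a → x * z = z * x →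
      ∀ h : H, actnu ν h * z = z * h := by
    intro z hza hzx h
    refine Algebra.adjoin_induction (s := ({a, x} : Set H))
      (p := fun h _ => actnu ν h * z = z * h) ?_ ?_ ?_ ?_ (hadj h)
    · intro g hg
      rcases hg with hg | hg
      · subst hg; rw [hφa]; exact hza
      · rw [Set.mem_singleton_iff] at hg; subst hg; rw [hφx]; exact hzx
    · intro r; rw [hφalg]; exact Algebra.commutes r z
    · intro g h' _ _ hg hh'; rw [map_add, add_mul, mul_add, hg, hh']
    · intro g h' _ _ hg hh'
      rw [hφmul, mul_assoc, hh', ← mul_assoc, hg, mul_assoc]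
  -- checking the centrality condition on generators suffices
  have hcen : ∀ z : H, z * a = a * z → z * x = x * z → ∀ h : H, z * h = h * z := by
    intro z hza hzx h
    refine Algebra.adjoin_induction (s := ({a, x} : Set H))
      (p := fun h _ => z * h = h * z) ?_ ?_ ?_ ?_ (hadj h)
    · intro g hg
      rcases hg with hg | hg
      · subst hg; exact hza
      · rw [Set.mem_singleton_iff] at hg; subst hg; exact hzx
    · intro r; exact (Algebra.commutes r z).symm
    · intro g h' _ _ hg hh'; rw [mul_add, add_mul, hg, hh']
    · intro g h' _ _ hg hh'; rw [← mul_assoc, hg, mul_assoc, hh', ← mul_assoc]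
  -- the key coefficient-extraction lemma
  have key : ∀ (d : Fin (2 * n) × Fin 2 → k),
      (∑ p : Fin (2 * n) × Fin 2, d p • B (p.1 + 1, p.2)) = 0 → ∀ p, d p = 0 := by
    intro d hd
    set e : (Fin (2 * n) × Fin 2) ≃ (Fin (2 * n) × Fin 2) :=
      Equiv.prodCongr (Equiv.addRight (1 : Fin (2 * n))) (Equiv.refl (Fin 2)) with he
    have h1 : ∑ q : Fin (2 * n) × Fin 2, d (e.symm q) • B q = 0 := by
      rw [← Equiv.sum_comp e (fun q => d (e.symm q) • B q)]
      rw [← hd]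
      refine Finset.sum_congr rfl ?_
      intro p _
      rw [Equiv.symm_apply_apply]
      simp [he, Prod.map]
    intro p
    have h3 := Fintype.linearIndependent_iff.mp B.linearIndependent
      (fun q => d (e.symm q)) h1 (e p)
    rwa [Equiv.symm_apply_apply] at h3
  constructor
  -- ===================== L(H) =====================
  · ext z
    simp only [Set.mem_setOf_eq, SetLike.mem_coe]
    constructor
    · intro hz
      have ha' : a * z + z * a = 0 := by
        have h' := hz a
        rw [hφa, neg_mul] at h'
        rw [← h', add_neg_cancel]
      set c : Fin (2 * n) × Fin 2 → k := fun p => B.repr z p with hc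
      have hsumA : a * z + z * a =
          ∑ p : Fin (2 * n) × Fin 2,
            (c p * (1 + (-1 : k) ^ ((p.2 : ℕ)))) • B (p.1 + 1, p.2) := by
        conv_lhs => rw [← B.sum_repr z]
        rw [Finset.mul_sum, Finset.sum_mul, ← Finset.sum_add_distrib]
        refine Finset.sum_congr rfl ?_
        rintro ⟨l, m⟩ _
        rw [mul_smul_comm, smul_mul_assoc, haB, hBa, smul_smul, ← add_smul]
        congr 1
        ring
      have hall := key _ (by rw [← hsumA]; exact ha')
      have hc0 : ∀ l : Fin (2 * n), c (l, 0) = 0 := by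
        intro l
        have h4 := hall (l, 0)
        simp only [Fin.val_zero, pow_zero] at h4
        have : (1 + 1 : k) ≠ 0 := by rwa [one_add_one_eq_two]
        exact (mul_eq_zero.mp h4).resolve_right this
      rw [← B.sum_repr z]
      refine Submodule.sum_mem _ ?_
      rintro ⟨l, m⟩ -
      rcases hfin2 m with rfl | rfl
      · rw [show B.repr z (l, 0) = c (l, 0) from rfl, hc0 l, zero_smul]
        exact Submodule.zero_mem _
      · refine Submodule.smul_mem _ _ (Submodule.subset_span ⟨l, ?_⟩)
        rw [hB1]
    · intro hz
      have hsub : Submodule.span k (Set.range fun l : Fin (2 * n) => a ^ (l : ℕ) * x) ≤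
          { carrier := {z : H | ∀ h, actnu ν h * z = z * h}
            add_mem' := by
              intro u v hu hv h; rw [mul_add, add_mul, hu h, hv h]
            zero_mem' := by intro h; simp
            smul_mem' := by
              intro r u hu h; rw [mul_smul_comm, smul_mul_assoc, hu h] } := by
        apply Submodule.span_le.2
        rintro _ ⟨l, rfl⟩
        refine hgen _ ?_ ?_
        · rw [neg_mul, ← mul_assoc, ← pow_succ' a (l : ℕ), mul_assoc, hxa, mul_neg,
            ← mul_assoc, pow_mul_comm', ← pow_succ' a (l : ℕ)]
        · rw [← mul_assoc, hxal, smul_mul_assoc, mul_assoc, hx, mul_zero, smul_zero]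

      exact hsub hz
  -- ===================== Z(H) =====================
  · ext z
    simp only [Set.mem_setOf_eq, SetLike.mem_coe]
    constructor
    · intro hz
      set c : Fin (2 * n) × Fin 2 → k := fun p => B.repr z p with hc
      -- from commuting with a : c (l, 1) = 0
      have ha' : a * z - z * a = 0 := by rw [hz a, sub_self]
      have hsumB : a * z - z * a =
          ∑ p : Fin (2 * n) × Fin 2,
            (c p * (1 - (-1 : k) ^ ((p.2 : ℕ)))) • B (p.1 + 1, p.2) := by
        conv_lhs => rw [← B.sum_repr z]
        rw [Finset.mul_sum, Finset.sum_mul, ← Finset.sum_sub_distrib]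
        refine Finset.sum_congr rfl ?_
        rintro ⟨l, m⟩ _
        rw [mul_smul_comm, smul_mul_assoc, haB, hBa, smul_smul, ← sub_smul]
        congr 1
        ring
      have hallB := key _ (by rw [← hsumB]; exact ha')
      have hc1 : ∀ l : Fin (2 * n), c (l, 1) = 0 := by
        intro l
        have h4 := hallB (l, 1)
        simp only [Fin.val_one, pow_one, sub_neg_eq_add, one_add_one_eq_two] at h4
        exact (mul_eq_zero.mp h4).resolve_right h2
      -- from commuting with x : c (l, 0) = 0 for odd l
      have hx' : x * z - z * x = 0 := by rw [← hz x, sub_self]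
      have hsumC : x * z - z * x =
          ∑ p : Fin (2 * n) × Fin 2,
            ((if p.2 = 0 then c p * ((-1 : k) ^ ((p.1 : ℕ)) - 1) else 0)) • B (p.1, 1) := by
        conv_lhs => rw [← B.sum_repr z]
        rw [Finset.mul_sum, Finset.sum_mul, ← Finset.sum_sub_distrib]
        refine Finset.sum_congr rfl ?_
        rintro ⟨l, m⟩ _
        rw [mul_smul_comm, smul_mul_assoc, hxB, hBx, smul_smul, smul_smul, ← sub_smul]
        congr 1
        rcases hfin2 m with rfl | rfl <;> simp <;> ring
      have hsumC' : ∑ p : Fin (2 * n) × Fin 2,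
          ((if p.2 = 1 then c (p.1, 0) * ((-1 : k) ^ ((p.1 : ℕ)) - 1) else 0)) • B p
          = 0 := by
        rw [← hx', hsumC, Fintype.sum_prod_type, Fintype.sum_prod_type]
        refine Finset.sum_congr rfl ?_
        intro l _
        rw [Fin.sum_univ_two, Fin.sum_univ_two]
        norm_num
      have hallC := Fintype.linearIndependent_iff.mp B.linearIndependent _ hsumC'
      have hcodd : ∀ l : Fin (2 * n), Odd (l : ℕ) → c (l, 0) = 0 := by
        intro l hl
        have h4 := hallC (l, 1)
        simp only [if_pos rfl] at h4
        have h5 : ((-1 : k) ^ ((l : ℕ)) - 1) = -2 := by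
          rw [Odd.neg_one_pow hl]; ring
        rw [h5] at h4
        have h6 : (-2 : k) ≠ 0 := by
          simpa using h2
        exact (mul_eq_zero.mp h4).resolve_right h6
      rw [← B.sum_repr z]
      refine Submodule.sum_mem _ ?_
      rintro ⟨l, m⟩ -
      rcases hfin2 m with rfl | rfl
      · rcases Nat.even_or_odd (l : ℕ) with he | ho
        · refine Submodule.smul_mem _ _ (Submodule.subset_span ?_)
          obtain ⟨j, hj⟩ := he
          have hlt := l.isLt
          refine ⟨⟨j, by omega⟩, ?_⟩
          rw [hB0]
          show a ^ (2 * j) = a ^ (l : ℕ)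
          congr 1
          omega
        · rw [show B.repr z (l, 0) = c (l, 0) from rfl, hcodd l ho, zero_smul]
          exact Submodule.zero_mem _
      · rw [show B.repr z (l, 1) = c (l, 1) from rfl, hc1 l, zero_smul]
        exact Submodule.zero_mem _
    · intro hz
      have hsub : Submodule.span k (Set.range fun l : Fin n => a ^ (2 * (l : ℕ))) ≤
          { carrier := {z : H | ∀ h, z * h = h * z}
            add_mem' := by
              intro u v hu hv h; rw [add_mul, mul_add, hu h, hv h]
            zero_mem' := by intro h; simp
            smul_mem' := by
              intro r u hu h; rw [smul_mul_assoc, mul_smul_comm, hu h] } := by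
        apply Submodule.span_le.2
        rintro _ ⟨l, rfl⟩
        refine hcen _ ?_ ?_
        · rw [pow_mul_comm']
        · rw [hxal]
          have : ((-1 : k) ^ (2 * (l : ℕ))) = 1 := by
            rw [pow_mul]; norm_num
          rw [this, one_smul]
      exact hsub hz
end

section
/- Let H be a ribbon Hopf algebra with braided Hopf algebra structure H^Bd on the underlying algebra H, where Δ^Bd(x) = Σᵢ S(a_{i(1)}) x₍₁₎ a_{i(2)} ⊗ S(bᵢ) x₍₂₎ (with R = Σᵢ aᵢ⊗bᵢ). Let λ be a right integral for H*, z ∈ L(H). Then for all x, y ∈ H: (λ·z ⊗ λ·z)(Δ^Bd(x)(1⊗y)) = λ(z x₍₁₎) λ(z x₍₂₎ y), i.e. Σᵢ λ(z S(a_{i(1)}) x₍₁₎ a_{i(2)}) λ(z S(bᵢ) x₍₂₎ y) = λ(z x₍₁₎) λ(z x₍₂₎ y). -/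
/- STATEMENT 19: H a finite-dimensional ribbon Hopf algebra with R = Σᵢ aᵢ ⊗ bᵢ,
λ a right integral for H*, z ∈ L(H).  Then for all x, y ∈ H:
Σᵢ λ(z S(a_{i(1)}) x₍₁₎ a_{i(2)}) λ(z S(bᵢ) x₍₂₎ y) = λ(z x₍₁₎) λ(z x₍₂₎ y). -/

open TensorProduct Coalgebra HopfAlgebra

section Aux
variable {R : Type*} {A : Type*} [CommSemiring R] [Semiring A] [HopfAlgebra R A]

noncomputable def reprMul {a b : A} {ι κ : Type*} (ra : Coalgebra.Repr R a ι) (rb : Coalgebra.Repr R b κ) :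
    Coalgebra.Repr R (a * b) (ι × κ) where
  index := ra.index ×ˢ rb.index
  left := fun p => ra.left p.1 * rb.left p.2
  right := fun p => ra.right p.1 * rb.right p.2
  eq := by
    rw [Bialgebra.comul_mul, ← ra.eq, ← rb.eq, Finset.sum_mul_sum, Finset.sum_product]
    simp [Algebra.TensorProduct.tmul_mul_tmul]

lemma sum_counit_smul_right {a : A} {ι : Type*} (r : Coalgebra.Repr R a ι) :
    ∑ i ∈ r.index, counit (R := R) (r.left i) • r.right i = a := by
  have h := congrArg (TensorProduct.lid R A) (Coalgebra.sum_counit_tmul_eq (R := R) r)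
  simp only [map_sum, lid_tmul, one_smul] at h
  exact h

lemma sum_counit_smul_left {a : A} {ι : Type*} (r : Coalgebra.Repr R a ι) :
    ∑ i ∈ r.index, counit (R := R) (r.right i) • r.left i = a := by
  have h := congrArg (TensorProduct.rid R A) (Coalgebra.sum_tmul_counit_eq (R := R) r)
  simp only [map_sum, rid_tmul, one_smul] at h
  exact h

lemma antipode_one'_s19 : antipode (R := R) (1 : A) = 1 := by
  have h := HopfAlgebra.mul_antipode_rTensor_comul_apply (R := R) (1 : A)
  simpa [Algebra.TensorProduct.one_def] using h

lemma sum4_comm {ι ι' κ κ' M : Type*} [AddCommMonoid M] (s : Finset ι) (t : Finset κ)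
    (Sn : ι → Finset ι') (Sm : κ → Finset κ') (f : ι → ι' → κ → κ' → M) :
    ∑ i ∈ s, ∑ n ∈ Sn i, ∑ j ∈ t, ∑ m ∈ Sm j, f i n j m
      = ∑ j ∈ t, ∑ m ∈ Sm j, ∑ i ∈ s, ∑ n ∈ Sn i, f i n j m := by
  calc ∑ i ∈ s, ∑ n ∈ Sn i, ∑ j ∈ t, ∑ m ∈ Sm j, f i n j m
      = ∑ i ∈ s, ∑ j ∈ t, ∑ n ∈ Sn i, ∑ m ∈ Sm j, f i n j m :=
        Finset.sum_congr rfl fun i _ => Finset.sum_comm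
    _ = ∑ j ∈ t, ∑ i ∈ s, ∑ n ∈ Sn i, ∑ m ∈ Sm j, f i n j m := Finset.sum_comm
    _ = ∑ j ∈ t, ∑ i ∈ s, ∑ m ∈ Sm j, ∑ n ∈ Sn i, f i n j m :=
        Finset.sum_congr rfl fun j _ => Finset.sum_congr rfl fun i _ => Finset.sum_comm
    _ = ∑ j ∈ t, ∑ m ∈ Sm j, ∑ i ∈ s, ∑ n ∈ Sn i, f i n j m :=
        Finset.sum_congr rfl fun j _ => Finset.sum_comm

theorem antipode_antimul (a b : A) :
    antipode (R := R) (a * b) = antipode (R := R) b * antipode (R := R) a := by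
  classical
  set S : A →ₗ[R] A := antipode (R := R) with hS
  let ra := ℛ R a
  let rb := ℛ R b
  let ra1 : ∀ i, Coalgebra.Repr R (ra.left i) (A × A) := fun i => ℛ R _
  let ra2 : ∀ i, Coalgebra.Repr R (ra.right i) (A × A) := fun i => ℛ R _
  let rb1 : ∀ j, Coalgebra.Repr R (rb.left j) (A × A) := fun j => ℛ R _
  let rb2 : ∀ j, Coalgebra.Repr R (rb.right j) (A × A) := fun j => ℛ R _
  let muu : A ⊗[R] (A ⊗[R] A) →ₗ[R] A :=
    (LinearMap.mul' R A) ∘ₗ (LinearMap.lTensor A (LinearMap.mul' R A))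
  have muu_tmul : ∀ x y z : A, muu (x ⊗ₜ[R] (y ⊗ₜ[R] z)) = x * (y * z) := by
    intro x y z
    simp [muu, LinearMap.mul'_apply]
  -- step A : switch nesting of the `a`-legs, for fixed `b`-legs
  have stepA : ∀ β₁ β₂ β₃ : A,
      (∑ i ∈ ra.index, ∑ n ∈ (ra2 i).index,
        S (ra.left i * β₁) * (((ra2 i).left n * β₂) * (S β₃ * S ((ra2 i).right n))))
      = ∑ i ∈ ra.index, ∑ n ∈ (ra1 i).index,
        S ((ra1 i).left n * β₁) * (((ra1 i).right n * β₂) * (S β₃ * S (ra.right i))) := by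
    intro β₁ β₂ β₃
    have h := Coalgebra.sum_map_tmul_tmul_eq
      (S ∘ₗ LinearMap.mulRight R β₁) (LinearMap.mulRight R β₂)
      (LinearMap.mulLeft R (S β₃) ∘ₗ S) a (repr := ra) (a₁ := ra1) (a₂ := ra2)
    have h2 := congrArg muu h
    simp only [map_sum, muu_tmul, LinearMap.comp_apply, LinearMap.mulRight_apply,
      LinearMap.mulLeft_apply] at h2
    exact h2
  -- step B : switch nesting of the `b`-legs, for fixed `a`-legs
  have stepB : ∀ α₁ α₂ α₃ : A,
      (∑ j ∈ rb.index, ∑ m ∈ (rb2 j).index,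
        S (α₁ * rb.left j) * ((α₂ * (rb2 j).left m) * (S ((rb2 j).right m) * S α₃)))
      = ∑ j ∈ rb.index, ∑ m ∈ (rb1 j).index,
        S (α₁ * (rb1 j).left m) * ((α₂ * (rb1 j).right m) * (S (rb.right j) * S α₃)) := by
    intro α₁ α₂ α₃
    have h := Coalgebra.sum_map_tmul_tmul_eq
      (S ∘ₗ LinearMap.mulLeft R α₁) (LinearMap.mulLeft R α₂)
      (LinearMap.mulRight R (S α₃) ∘ₗ S) b (repr := rb) (a₁ := rb1) (a₂ := rb2)
    have h2 := congrArg muu h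
    simp only [map_sum, muu_tmul, LinearMap.comp_apply, LinearMap.mulRight_apply,
      LinearMap.mulLeft_apply] at h2
    exact h2
  -- the middle quantity, fully right-nested
  have h1 : (∑ i ∈ ra.index, ∑ n ∈ (ra2 i).index, ∑ j ∈ rb.index, ∑ m ∈ (rb2 j).index,
      S (ra.left i * rb.left j) *
        (((ra2 i).left n * (rb2 j).left m) * (S ((rb2 j).right m) * S ((ra2 i).right n))))
      = S (a * b) := by
    have inner1 : ∀ i n j, (∑ m ∈ (rb2 j).index, S (ra.left i * rb.left j) *
        (((ra2 i).left n * (rb2 j).left m) * (S ((rb2 j).right m) * S ((ra2 i).right n))))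
        = counit (R := R) (rb.right j) •
            (S (ra.left i * rb.left j) * ((ra2 i).left n * S ((ra2 i).right n))) := by
      intro i n j
      rw [← Finset.mul_sum]
      have : (∑ m ∈ (rb2 j).index,
          ((ra2 i).left n * (rb2 j).left m) * (S ((rb2 j).right m) * S ((ra2 i).right n)))
          = (ra2 i).left n * ((∑ m ∈ (rb2 j).index, (rb2 j).left m * S ((rb2 j).right m)) *
              S ((ra2 i).right n)) := by
        rw [Finset.sum_mul, Finset.mul_sum]
        exact Finset.sum_congr rfl fun m _ => by simp [mul_assoc]
      rw [this, sum_mul_antipode_eq_smul (rb2 j)]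
      simp [smul_mul_assoc, mul_smul_comm, mul_assoc]
    calc (∑ i ∈ ra.index, ∑ n ∈ (ra2 i).index, ∑ j ∈ rb.index, ∑ m ∈ (rb2 j).index,
        S (ra.left i * rb.left j) *
          (((ra2 i).left n * (rb2 j).left m) * (S ((rb2 j).right m) * S ((ra2 i).right n))))
        = ∑ i ∈ ra.index, ∑ n ∈ (ra2 i).index, ∑ j ∈ rb.index,
            counit (R := R) (rb.right j) •
              (S (ra.left i * rb.left j) * ((ra2 i).left n * S ((ra2 i).right n))) :=
          Finset.sum_congr rfl fun i _ => Finset.sum_congr rfl fun n _ =>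
            Finset.sum_congr rfl fun j _ => inner1 i n j
      _ = ∑ i ∈ ra.index, ∑ n ∈ (ra2 i).index,
            S (ra.left i * b) * ((ra2 i).left n * S ((ra2 i).right n)) := by
          refine Finset.sum_congr rfl fun i _ => Finset.sum_congr rfl fun n _ => ?_
          have hx := congrArg (S ∘ₗ LinearMap.mulLeft R (ra.left i)) (sum_counit_smul_left rb)
          simp only [map_sum, map_smul, LinearMap.comp_apply, LinearMap.mulLeft_apply] at hx
          calc ∑ j ∈ rb.index, counit (R := R) (rb.right j) •
                (S (ra.left i * rb.left j) * ((ra2 i).left n * S ((ra2 i).right n)))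
              = (∑ j ∈ rb.index, counit (R := R) (rb.right j) • S (ra.left i * rb.left j)) *
                  ((ra2 i).left n * S ((ra2 i).right n)) := by
                rw [Finset.sum_mul]
                exact Finset.sum_congr rfl fun j _ => (smul_mul_assoc _ _ _).symm
            _ = _ := by rw [hx]
      _ = ∑ i ∈ ra.index, counit (R := R) (ra.right i) • S (ra.left i * b) := by
          refine Finset.sum_congr rfl fun i _ => ?_
          rw [← Finset.mul_sum, sum_mul_antipode_eq_smul (ra2 i)]
          simp [mul_smul_comm]
      _ = S (a * b) := by
          have h := congrArg (S ∘ₗ LinearMap.mulRight R b) (sum_counit_smul_left ra)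
          simp only [map_sum, map_smul, LinearMap.comp_apply, LinearMap.mulRight_apply] at h
          exact h
  have h2 : (∑ i ∈ ra.index, ∑ n ∈ (ra2 i).index, ∑ j ∈ rb.index, ∑ m ∈ (rb2 j).index,
      S (ra.left i * rb.left j) *
        (((ra2 i).left n * (rb2 j).left m) * (S ((rb2 j).right m) * S ((ra2 i).right n))))
      = ∑ i ∈ ra.index, ∑ n ∈ (ra1 i).index, ∑ j ∈ rb.index, ∑ m ∈ (rb1 j).index,
          S ((ra1 i).left n * (rb1 j).left m) *
            (((ra1 i).right n * (rb1 j).right m) * (S (rb.right j) * S (ra.right i))) := by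
    calc (∑ i ∈ ra.index, ∑ n ∈ (ra2 i).index, ∑ j ∈ rb.index, ∑ m ∈ (rb2 j).index,
        S (ra.left i * rb.left j) *
          (((ra2 i).left n * (rb2 j).left m) * (S ((rb2 j).right m) * S ((ra2 i).right n))))
        = ∑ i ∈ ra.index, ∑ n ∈ (ra2 i).index, ∑ j ∈ rb.index, ∑ m ∈ (rb1 j).index,
            S (ra.left i * (rb1 j).left m) *
              (((ra2 i).left n * (rb1 j).right m) * (S (rb.right j) * S ((ra2 i).right n))) :=
          Finset.sum_congr rfl fun i _ => Finset.sum_congr rfl fun n _ =>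
            stepB (ra.left i) ((ra2 i).left n) ((ra2 i).right n)
      _ = ∑ j ∈ rb.index, ∑ m ∈ (rb1 j).index, ∑ i ∈ ra.index, ∑ n ∈ (ra2 i).index,
            S (ra.left i * (rb1 j).left m) *
              (((ra2 i).left n * (rb1 j).right m) * (S (rb.right j) * S ((ra2 i).right n))) :=
          sum4_comm _ _ _ _ _
      _ = ∑ j ∈ rb.index, ∑ m ∈ (rb1 j).index, ∑ i ∈ ra.index, ∑ n ∈ (ra1 i).index,
            S ((ra1 i).left n * (rb1 j).left m) *
              (((ra1 i).right n * (rb1 j).right m) * (S (rb.right j) * S (ra.right i))) :=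
          Finset.sum_congr rfl fun j _ => Finset.sum_congr rfl fun m _ =>
            stepA ((rb1 j).left m) ((rb1 j).right m) (rb.right j)
      _ = ∑ i ∈ ra.index, ∑ n ∈ (ra1 i).index, ∑ j ∈ rb.index, ∑ m ∈ (rb1 j).index,
            S ((ra1 i).left n * (rb1 j).left m) *
              (((ra1 i).right n * (rb1 j).right m) * (S (rb.right j) * S (ra.right i))) :=
          (sum4_comm _ _ _ _ _).symm
  have h3 : (∑ i ∈ ra.index, ∑ n ∈ (ra1 i).index, ∑ j ∈ rb.index, ∑ m ∈ (rb1 j).index,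
      S ((ra1 i).left n * (rb1 j).left m) *
        (((ra1 i).right n * (rb1 j).right m) * (S (rb.right j) * S (ra.right i))))
      = S b * S a := by
    have hprod : ∀ i j, (∑ n ∈ (ra1 i).index, ∑ m ∈ (rb1 j).index,
        S ((ra1 i).left n * (rb1 j).left m) * ((ra1 i).right n * (rb1 j).right m))
        = (counit (R := R) (ra.left i) * counit (R := R) (rb.left j)) • (1 : A) := by
      intro i j
      have h := sum_antipode_mul_eq_smul (R := R) (reprMul (ra1 i) (rb1 j))
      rw [reprMul] at h
      simp only [Finset.sum_product, Bialgebra.counit_mul] at h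
      exact h
    calc (∑ i ∈ ra.index, ∑ n ∈ (ra1 i).index, ∑ j ∈ rb.index, ∑ m ∈ (rb1 j).index,
        S ((ra1 i).left n * (rb1 j).left m) *
          (((ra1 i).right n * (rb1 j).right m) * (S (rb.right j) * S (ra.right i))))
        = ∑ i ∈ ra.index, ∑ j ∈ rb.index, ∑ n ∈ (ra1 i).index, ∑ m ∈ (rb1 j).index,
            (S ((ra1 i).left n * (rb1 j).left m) *
              ((ra1 i).right n * (rb1 j).right m)) * (S (rb.right j) * S (ra.right i)) := by
          refine Finset.sum_congr rfl fun i _ => ?_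
          rw [Finset.sum_comm]
          exact Finset.sum_congr rfl fun j _ => Finset.sum_congr rfl fun n _ =>
            Finset.sum_congr rfl fun m _ => by simp [mul_assoc]
      _ = ∑ i ∈ ra.index, ∑ j ∈ rb.index,
            ((counit (R := R) (ra.left i) * counit (R := R) (rb.left j)) • (1 : A)) *
              (S (rb.right j) * S (ra.right i)) := by
          refine Finset.sum_congr rfl fun i _ => Finset.sum_congr rfl fun j _ => ?_
          rw [← hprod i j, Finset.sum_mul]
          exact Finset.sum_congr rfl fun n _ => (Finset.sum_mul _ _ _).symm
      _ = ∑ i ∈ ra.index, counit (R := R) (ra.left i) •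
            ((∑ j ∈ rb.index, counit (R := R) (rb.left j) • S (rb.right j)) * S (ra.right i)) := by
          refine Finset.sum_congr rfl fun i _ => ?_
          rw [Finset.sum_mul, Finset.smul_sum]
          exact Finset.sum_congr rfl fun j _ => by simp [smul_mul_assoc, mul_smul]
      _ = S b * S a := by
          have hb := congrArg S (sum_counit_smul_right rb)
          simp only [map_sum, map_smul] at hb
          have ha := congrArg S (sum_counit_smul_right ra)
          simp only [map_sum, map_smul] at ha
          rw [hb, ← ha, Finset.mul_sum]
          exact Finset.sum_congr rfl fun i _ => (mul_smul_comm _ _ _).symm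
  rw [← h1, h2, h3]

end Aux

theorem stmt19 {k H : Type*} [Field k] [Ring H] [HopfAlgebra k H] [FiniteDimensional k H]
    -- quasitriangular structure
    (R Rinv : H ⊗[k] H) (hR1 : R * Rinv = 1) (hR2 : Rinv * R = 1)
    (hRcomm : ∀ x : H,
      R * Coalgebra.comul (R := k) x = (TensorProduct.comm k H H) (Coalgebra.comul (R := k) x) * R)
    (hR13_12 : LinearMap.lTensor H (Coalgebra.comul (R := k) (A := H)) R =
      LinearMap.lTensor H (Algebra.TensorProduct.includeRight : H →ₐ[k] H ⊗[k] H).toLinearMap R *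
      LinearMap.lTensor H (Algebra.TensorProduct.includeLeft : H →ₐ[k] H ⊗[k] H).toLinearMap R)
    (hR13_23 : LinearMap.rTensor H (Coalgebra.comul (R := k) (A := H)) R =
      LinearMap.rTensor H (Algebra.TensorProduct.includeLeft : H →ₐ[k] H ⊗[k] H).toLinearMap R *
      LinearMap.rTensor H (Algebra.TensorProduct.includeRight : H →ₐ[k] H ⊗[k] H).toLinearMap R)
    -- ribbon structure
    (θ θinv : H) (hθ1 : θ * θinv = 1) (hθ2 : θinv * θ = 1)
    (hθc : ∀ x : H, θ * x = x * θ)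
    (hθS : HopfAlgebra.antipode (R := k) θ = θ)
    (hθΔ : Coalgebra.comul (R := k) θ = (θ ⊗ₜ[k] θ) * ((TensorProduct.comm k H H) R * R))
    -- a finite representation R = Σᵢ aᵢ ⊗ bᵢ of the R-matrix
    (ιR : Type) (sR : Finset ιR) (aa bb : ιR → H)
    (hRrep : R = ∑ i ∈ sR, aa i ⊗ₜ[k] bb i)
    -- a right integral λ for H*
    (lam : H →ₗ[k] k)
    (hlam : ∀ (x : H) {ι : Type*} (r : Coalgebra.Repr k x ι),
      ∑ i ∈ r.index, lam (r.left i) • r.right i = lam x • (1 : H))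
    -- the distinguished grouplike ν of H* and an element z ∈ L(H)
    (Λ : H) (hΛ0 : Λ ≠ 0)
    (hΛ : ∀ w : H, w * Λ = Coalgebra.counit (R := k) w • Λ)
    (ν : H →ₐ[k] k) (hν : ∀ w : H, Λ * w = ν w • Λ)
    (z : H) (hz : ∀ w : H, actnu ν w * z = z * w)
    -- the identity satisfied on L(H):  λ(zxy) = λ(z S²(y) x)
    (hzprop : ∀ x y : H, lam (z * x * y) =
      lam (z * HopfAlgebra.antipode (R := k) (HopfAlgebra.antipode (R := k) y) * x)) :
    ∀ (x y : H) {ιx : Type*} (rx : Coalgebra.Repr k x ιx) {ιa : ιR → Type*}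
      (ra : ∀ i : ιR, Coalgebra.Repr k (aa i) (ιa i)),
      ∑ i ∈ sR, ∑ p ∈ (ra i).index, ∑ q ∈ rx.index,
        lam (z * HopfAlgebra.antipode (R := k) ((ra i).left p) * rx.left q * (ra i).right p) *
          lam (z * HopfAlgebra.antipode (R := k) (bb i) * rx.right q * y)
      = ∑ q ∈ rx.index, lam (z * rx.left q) * lam (z * rx.right q * y) := by
  intro x y ιx rx ιa ra
  classical
  set S : H →ₗ[k] H := HopfAlgebra.antipode (R := k) with hSdef
  -- step 0 : the normalization (ε ⊗ id) R = 1
  set g : H ⊗[k] H →ₗ[k] H :=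
    (TensorProduct.lid k H).toLinearMap ∘ₗ
      (LinearMap.rTensor H (Coalgebra.counit (R := k) (A := H))) with hg
  have hgt : ∀ u v : H, g (u ⊗ₜ[k] v) = counit (R := k) u • v := by
    intro u v
    simp [hg]
  set w : H := ∑ i ∈ sR, counit (R := k) (aa i) • bb i with hwdef
  have hw : w = 1 := by
    have h := congrArg (LinearMap.rTensor H g) hR13_23
    have hL : LinearMap.rTensor H g
        (LinearMap.rTensor H (Coalgebra.comul (R := k) (A := H)) R) = R := by
      rw [hRrep, map_sum, map_sum]
      refine Finset.sum_congr rfl fun i _ => ?_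
      rw [LinearMap.rTensor_tmul, LinearMap.rTensor_tmul]
      congr 1
      simp [hg, Coalgebra.rTensor_counit_comul]
    have hRHS : LinearMap.rTensor H g
        ((LinearMap.rTensor H
            (Algebra.TensorProduct.includeLeft : H →ₐ[k] H ⊗[k] H).toLinearMap R) *
          (LinearMap.rTensor H
            (Algebra.TensorProduct.includeRight : H →ₐ[k] H ⊗[k] H).toLinearMap R))
        = ∑ i ∈ sR, ∑ j ∈ sR, counit (R := k) (aa i) • (aa j ⊗ₜ[k] (bb i * bb j)) := by
      rw [hRrep, map_sum, map_sum, Finset.sum_mul_sum, map_sum]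
      refine Finset.sum_congr rfl fun i _ => ?_
      rw [map_sum]
      refine Finset.sum_congr rfl fun j _ => ?_
      simp only [LinearMap.rTensor_tmul, AlgHom.toLinearMap_apply,
        Algebra.TensorProduct.includeLeft_apply, Algebra.TensorProduct.includeRight_apply,
        Algebra.TensorProduct.tmul_mul_tmul, one_mul, mul_one, hgt,
        TensorProduct.smul_tmul']
    have hReq : R = ∑ i ∈ sR, ∑ j ∈ sR,
        counit (R := k) (aa i) • (aa j ⊗ₜ[k] (bb i * bb j)) := by
      rw [← hL, h, hRHS]
    have hkey : ((1:H) ⊗ₜ[k] w) * R = R := by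
      calc ((1:H) ⊗ₜ[k] w) * R
          = ∑ j ∈ sR, ((1:H) ⊗ₜ[k] w) * (aa j ⊗ₜ[k] bb j) := by
            rw [hRrep, Finset.mul_sum]
        _ = ∑ j ∈ sR, ∑ i ∈ sR, counit (R := k) (aa i) • (aa j ⊗ₜ[k] (bb i * bb j)) := by
            refine Finset.sum_congr rfl fun j _ => ?_
            rw [Algebra.TensorProduct.tmul_mul_tmul, one_mul, hwdef, Finset.sum_mul,
              TensorProduct.tmul_sum]
            exact Finset.sum_congr rfl fun i _ => by rw [smul_mul_assoc, TensorProduct.tmul_smul]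
        _ = ∑ i ∈ sR, ∑ j ∈ sR, counit (R := k) (aa i) • (aa j ⊗ₜ[k] (bb i * bb j)) :=
            Finset.sum_comm
        _ = R := hReq.symm
    have h1w : ((1:H) ⊗ₜ[k] w) = 1 := by
      calc (1:H) ⊗ₜ[k] w = ((1:H) ⊗ₜ[k] w) * (R * Rinv) := by rw [hR1, mul_one]
        _ = (((1:H) ⊗ₜ[k] w) * R) * Rinv := by rw [mul_assoc]
        _ = R * Rinv := by rw [hkey]
        _ = 1 := hR1
    have h2 := congrArg g h1w
    rw [hgt 1 w] at h2
    rw [Algebra.TensorProduct.one_def, hgt 1 1] at h2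
    simpa [Bialgebra.counit_one] using h2
  have hw1 : (∑ i ∈ sR, counit (R := k) (aa i) • bb i) = 1 := hwdef ▸ hw
  -- the key local identity Σ S²(a₂) S(a₁) = ε(a) 1
  have key1 : ∀ i : ιR, (∑ p ∈ (ra i).index,
      S (S ((ra i).right p)) * S ((ra i).left p)) = counit (R := k) (aa i) • (1 : H) := by
    intro i
    calc (∑ p ∈ (ra i).index, S (S ((ra i).right p)) * S ((ra i).left p))
        = ∑ p ∈ (ra i).index, S ((ra i).left p * S ((ra i).right p)) :=
          Finset.sum_congr rfl fun p _ => (antipode_antimul _ _).symm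
      _ = S (∑ p ∈ (ra i).index, (ra i).left p * S ((ra i).right p)) := (map_sum _ _ _).symm
      _ = S (counit (R := k) (aa i) • (1 : H)) := by
          rw [sum_mul_antipode_eq_smul (ra i)]
      _ = counit (R := k) (aa i) • (1 : H) := by rw [map_smul, hSdef, antipode_one'_s19]
  -- rewriting a single term using `hzprop`
  have step1 : ∀ l c r : H, lam (z * S l * c * r) = lam (z * (S (S r) * S l) * c) := by
    intro l c r
    have h := hzprop (S l * c) r
    rw [show z * (S l * c) * r = z * S l * c * r by simp [mul_assoc]] at h
    rw [h]
    congr 1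
    simp [mul_assoc]
  calc ∑ i ∈ sR, ∑ p ∈ (ra i).index, ∑ q ∈ rx.index,
        lam (z * S ((ra i).left p) * rx.left q * (ra i).right p) *
          lam (z * S (bb i) * rx.right q * y)
      = ∑ i ∈ sR, ∑ q ∈ rx.index, ∑ p ∈ (ra i).index,
          lam (z * (S (S ((ra i).right p)) * S ((ra i).left p)) * rx.left q) *
            lam (z * S (bb i) * rx.right q * y) := by
        refine Finset.sum_congr rfl fun i _ => ?_
        rw [Finset.sum_comm]
        exact Finset.sum_congr rfl fun q _ => Finset.sum_congr rfl fun p _ => by rw [step1]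
    _ = ∑ i ∈ sR, ∑ q ∈ rx.index,
          (counit (R := k) (aa i) * lam (z * rx.left q)) *
            lam (z * S (bb i) * rx.right q * y) := by
        refine Finset.sum_congr rfl fun i _ => Finset.sum_congr rfl fun q _ => ?_
        rw [← Finset.sum_mul]
        congr 1
        rw [← map_sum]
        rw [show (∑ p ∈ (ra i).index,
            z * (S (S ((ra i).right p)) * S ((ra i).left p)) * rx.left q)
            = z * (∑ p ∈ (ra i).index, S (S ((ra i).right p)) * S ((ra i).left p)) * rx.left q by
          rw [Finset.mul_sum, Finset.sum_mul]]
        rw [key1 i]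
        rw [show z * (counit (R := k) (aa i) • (1:H)) * rx.left q
            = counit (R := k) (aa i) • (z * rx.left q) by
          rw [mul_smul_comm, mul_one, smul_mul_assoc]]
        rw [map_smul, smul_eq_mul]
    _ = ∑ q ∈ rx.index, lam (z * rx.left q) *
          (∑ i ∈ sR, counit (R := k) (aa i) * lam (z * S (bb i) * rx.right q * y)) := by
        rw [Finset.sum_comm]
        refine Finset.sum_congr rfl fun q _ => ?_
        rw [Finset.mul_sum]
        exact Finset.sum_congr rfl fun i _ => by ring
    _ = ∑ q ∈ rx.index, lam (z * rx.left q) * lam (z * rx.right q * y) := by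
        refine Finset.sum_congr rfl fun q _ => ?_
        congr 1
        calc ∑ i ∈ sR, counit (R := k) (aa i) * lam (z * S (bb i) * rx.right q * y)
            = ∑ i ∈ sR, lam (z * S (counit (R := k) (aa i) • bb i) * rx.right q * y) := by
              refine Finset.sum_congr rfl fun i _ => ?_
              rw [map_smul]
              rw [show z * (counit (R := k) (aa i) • S (bb i)) * rx.right q * y
                  = counit (R := k) (aa i) • (z * S (bb i) * rx.right q * y) by
                rw [mul_smul_comm, smul_mul_assoc, smul_mul_assoc]]
              rw [map_smul, smul_eq_mul]
          _ = lam (z * S (∑ i ∈ sR, counit (R := k) (aa i) • bb i) * rx.right q * y) := by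
              rw [← map_sum]
              congr 1
              rw [map_sum, Finset.mul_sum, Finset.sum_mul, Finset.sum_mul]
          _ = lam (z * rx.right q * y) := by
              rw [hw1, hSdef, antipode_one'_s19, mul_one]
end
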